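/- Let A be a nonnegative integer matrix with columns v_1,...,v_q and let B = {(v_1,1),...,(v_q,1),(0,1)} ⊆ ℤ^{n+1}. If B is a Hilbert basis, then the set A = {v_1,...,v_q} satisfies ℕA = ℤA ∩ ℝ₊A (i.e., the semigroup generated by the v_i is normal). -/

import Mathlib

/-- The family `B = {(v₁,1),…,(v_q,1),(0,1)} ⊆ ℤ^{n+1}` (integer version). -/
def liftFam {n q : ℕ} (v : Fin q → Fin n → ℕ) : Option (Fin q) → Fin (n+1) → ℤ :=
  fun o => o.elim (Fin.snoc (0 : Fin n → ℤ) 1)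
    (fun k => Fin.snoc (fun j => (v k j : ℤ)) 1)

/-- A finite family `u : ι → ℤᵐ` is a Hilbert basis: `ℕH = ℝ₊H ∩ ℤᵐ`. -/
def IsHilbertBasisFam {m : ℕ} {ι : Type*} [Fintype ι] (u : ι → Fin m → ℤ) : Prop :=
  ∀ z : Fin m → ℤ,
    (∃ c : ι → ℕ, z = ∑ i, c i • u i) ↔
      ∃ t : ι → ℝ, (∀ i, 0 ≤ t i) ∧
        (fun j => (z j : ℝ)) = ∑ i, t i • fun j => ((u i j : ℝ))

/-- if `B = {(v₁,1),…,(v_q,1),(0,1)}` is a Hilbert basis then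
`ℕA = ℤA ∩ ℝ₊A` for `A = {v₁,…,v_q}`. -/
theorem stmt5 (n q : ℕ) (v : Fin q → Fin n → ℕ)
    (hB : IsHilbertBasisFam (liftFam v)) :
    ∀ a : Fin n → ℤ,
      (∃ c : Fin q → ℕ, a = ∑ k, c k • fun j => (v k j : ℤ)) ↔
        ((∃ c : Fin q → ℤ, a = ∑ k, c k • fun j => (v k j : ℤ)) ∧
          (∃ t : Fin q → ℝ, (∀ k, 0 ≤ t k) ∧
            (fun j => (a j : ℝ)) = ∑ k, t k • fun j => (v k j : ℝ))) := by
  intro a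
  constructor
  · rintro ⟨c, hc⟩
    refine ⟨⟨fun k => (c k : ℤ), by simpa using hc⟩,
      fun k => (c k : ℝ), fun k => by positivity, ?_⟩
    funext j
    have h := congrFun hc j
    simp only [Finset.sum_apply, Pi.smul_apply, Pi.mul_apply, Pi.natCast_apply,
      nsmul_eq_mul, smul_eq_mul] at h ⊢
    rw [h]; push_cast; ring
  · rintro ⟨-, t, ht0, ht⟩
    set S := ∑ k, t k with hSdef
    have hSN : S ≤ (⌈S⌉₊ : ℝ) := Nat.le_ceil S
    set z : Fin (n+1) → ℤ := Fin.snoc a (⌈S⌉₊ : ℤ) with hz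
    have heq : (fun j => ((z j : ℤ) : ℝ)) =
        ∑ i : Option (Fin q), (fun o => o.elim ((⌈S⌉₊ : ℝ) - S) t) i •
          fun j => ((liftFam v i j : ℤ) : ℝ) := by
      funext j
      refine Fin.lastCases ?_ ?_ j
      · simp only [hz, Fin.snoc_last, Fintype.sum_option, Finset.sum_apply,
          Pi.smul_apply, liftFam, Option.elim, smul_eq_mul, mul_one, Int.cast_natCast]
        push_cast; simp only [mul_one]; linarith [hSdef]
      · intro i
        have h := congrFun ht i
        simp only [Finset.sum_apply, Pi.smul_apply, smul_eq_mul] at h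
        simp only [hz, Fin.snoc_castSucc, Fintype.sum_option, Finset.sum_apply,
          Pi.smul_apply, liftFam, Option.elim, Pi.zero_apply, smul_eq_mul,
          Int.cast_zero, mul_zero, zero_add]
        simpa using h
    obtain ⟨c, hc⟩ := (hB z).mpr ⟨fun o => o.elim ((⌈S⌉₊ : ℝ) - S) t,
      fun o => by cases o with
        | none => simpa using hSN
        | some k => exact ht0 k, heq⟩
    refine ⟨fun k => c (some k), ?_⟩
    funext j
    have h := congrFun hc (Fin.castSucc j)
    simp only [hz, Fin.snoc_castSucc, Finset.sum_apply, Pi.smul_apply,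
      Fintype.sum_option, liftFam, Option.elim, Pi.zero_apply, smul_eq_mul,
      nsmul_eq_mul, mul_zero, mul_one, zero_add, smul_zero] at h ⊢
    simpa using h
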